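/- arXiv:1808.00625 — 2 statements merged into one kernel-verified Lean document; each statement's English description precedes it below -/
import Mathlib

section
/- Gauss's summation theorem: if Re(c - a - b) > 0 and c is not a nonpositive integer, then the hypergeometric series Σ_{m≥0} (a)_m (b)_m / ((c)_m m!) converges and equals Γ(c)Γ(c-a-b)/(Γ(c-a)Γ(c-b)). -/
open scoped Nat

/-- The Pochhammer symbol `(a)ₘ = a(a+1)⋯(a+m-1)` in `ℂ`. -/
noncomputable def poch (a : ℂ) (m : ℕ) : ℂ := (ascPochhammer ℂ m).eval a

open Filter Finset Complex Topology

lemma poch_zero (z : ℂ) : poch z 0 = 1 := by simp [poch]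

lemma poch_succ (z : ℂ) (m : ℕ) : poch z (m + 1) = poch z m * (z + m) :=
  ascPochhammer_succ_eval m z

lemma poch_eq_prod (z : ℂ) (m : ℕ) : poch z m = ∏ j ∈ range m, (z + j) := by
  induction m with
  | zero => simp [poch_zero]
  | succ n ih => rw [poch_succ, ih, prod_range_succ]

lemma poch_ne_zero {z : ℂ} (h : ∀ j : ℕ, z ≠ -j) (m : ℕ) : poch z m ≠ 0 := by
  rw [poch_eq_prod]
  exact prod_ne_zero_iff.mpr fun j _ hj => h j (by linear_combination hj)

lemma poch_succ_left (z : ℂ) (m : ℕ) : poch z (m + 1) = z * poch (z + 1) m := by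
  rw [poch_eq_prod, poch_eq_prod, prod_range_succ']
  rw [mul_comm]
  congr 1
  · simp
  · exact Finset.prod_congr rfl fun x _ => by push_cast; ring

lemma gammaSeq_eq (z : ℂ) (n : ℕ) :
    Complex.GammaSeq z n = (n : ℂ) ^ z * n ! / poch z (n + 1) := by
  rw [Complex.GammaSeq, poch_eq_prod]

lemma gammaSeq_ne_zero {z : ℂ} (h : ∀ j : ℕ, z ≠ -j) {n : ℕ} (hn : n ≠ 0) :
    Complex.GammaSeq z n ≠ 0 := by
  rw [gammaSeq_eq]
  apply div_ne_zero (mul_ne_zero ?_ ?_) (poch_ne_zero h _)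
  · simp only [ne_eq, Complex.cpow_eq_zero_iff, not_and_or, not_not]
    exact Or.inl (by exact_mod_cast hn)
  · exact_mod_cast n.factorial_ne_zero

noncomputable def T (a b c : ℂ) (m : ℕ) : ℂ := poch a m * poch b m / (poch c m * (m ! : ℂ))

lemma T_zero (a b c : ℂ) : T a b c 0 = 1 := by simp [T, poch_zero]

lemma T_rep {a b c : ℂ} (ha : ∀ j : ℕ, a ≠ -j) (hb : ∀ j : ℕ, b ≠ -j)
    (hc : ∀ j : ℕ, c ≠ -j) {n : ℕ} (hn : n ≠ 0) :
    ((n : ℂ) + 1) * T a b c (n + 1) = (n : ℂ) ^ (a + b - c)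
      * (Complex.GammaSeq c n / (Complex.GammaSeq a n * Complex.GammaSeq b n)) := by
  have hn0 : (n : ℂ) ≠ 0 := by exact_mod_cast hn
  have hcp : (n : ℂ) ^ (a + b - c) = (n : ℂ) ^ a * (n : ℂ) ^ b / (n : ℂ) ^ c := by
    rw [Complex.cpow_sub _ _ hn0, Complex.cpow_add _ _ hn0]
  have hpa := poch_ne_zero ha (n + 1)
  have hpb := poch_ne_zero hb (n + 1)
  have hpc := poch_ne_zero hc (n + 1)
  have hna : (n : ℂ) ^ a ≠ 0 := by
    simp only [ne_eq, Complex.cpow_eq_zero_iff, not_and_or, not_not]; exact Or.inl hn0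
  have hnb : (n : ℂ) ^ b ≠ 0 := by
    simp only [ne_eq, Complex.cpow_eq_zero_iff, not_and_or, not_not]; exact Or.inl hn0
  have hnc : (n : ℂ) ^ c ≠ 0 := by
    simp only [ne_eq, Complex.cpow_eq_zero_iff, not_and_or, not_not]; exact Or.inl hn0
  have hf : ((n)! : ℂ) ≠ 0 := by exact_mod_cast n.factorial_ne_zero
  have hfs : (((n+1))! : ℂ) = ((n : ℂ) + 1) * (n)! := by
    push_cast [Nat.factorial_succ]; ring
  have hn1 : ((n : ℂ) + 1) ≠ 0 := by
    have : (0:ℝ) < (n:ℝ) + 1 := by positivity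
    intro h
    have := congrArg Complex.re h
    simp at this
    linarith
  have e1 : Complex.GammaSeq a n * Complex.GammaSeq b n
      = ((n : ℂ) ^ a * n ! * ((n : ℂ) ^ b * n !)) / (poch a (n + 1) * poch b (n + 1)) := by
    rw [gammaSeq_eq, gammaSeq_eq, div_mul_div_comm]
  have e2 : Complex.GammaSeq c n / (Complex.GammaSeq a n * Complex.GammaSeq b n)
      = ((n : ℂ) ^ c * n ! * (poch a (n + 1) * poch b (n + 1)))
        / (poch c (n + 1) * ((n : ℂ) ^ a * n ! * ((n : ℂ) ^ b * n !))) := by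
    rw [gammaSeq_eq c, e1, div_div_div_eq]
  rw [e2, hcp, T, div_mul_div_comm, mul_div_assoc' ((n:ℂ)+1), div_eq_div_iff, hfs]
  · push_cast
    ring
  · exact mul_ne_zero hpc (by exact_mod_cast Nat.factorial_ne_zero (n+1))
  · exact mul_ne_zero hnc (mul_ne_zero hpc (mul_ne_zero (mul_ne_zero hna hf) (mul_ne_zero hnb hf)))

lemma T_norm {a b c : ℂ} (ha : ∀ j : ℕ, a ≠ -j) (hb : ∀ j : ℕ, b ≠ -j)
    (hc : ∀ j : ℕ, c ≠ -j) {n : ℕ} (hn : n ≠ 0) :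
    ((n : ℝ) + 1) * ‖T a b c (n + 1)‖ = (n : ℝ) ^ ((a + b - c).re)
      * ‖Complex.GammaSeq c n / (Complex.GammaSeq a n * Complex.GammaSeq b n)‖ := by
  have h := congrArg norm (T_rep ha hb hc hn)
  rw [norm_mul, norm_mul,
    show ((n : ℂ) + 1) = ((n + 1 : ℕ) : ℂ) by push_cast; ring, Complex.norm_natCast,
    Complex.norm_natCast_cpow_of_pos (Nat.pos_of_ne_zero hn)] at h
  rw [← h]
  push_cast
  ring

lemma poch_eq_zero {z : ℂ} {j : ℕ} (hz : z = -j) {m : ℕ} (hm : j < m) : poch z m = 0 := by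
  rw [poch_eq_prod]
  exact Finset.prod_eq_zero (Finset.mem_range.mpr hm) (by rw [hz]; ring)

lemma summable_norm_T (a b c : ℂ) (hc : ∀ m : ℕ, c ≠ -(m : ℂ)) (hre : 0 < (c - a - b).re) :
    Summable (fun m => ‖T a b c m‖) := by
  by_cases hab : (∃ j : ℕ, a = -j) ∨ (∃ j : ℕ, b = -j)
  · obtain ⟨j, hj⟩ | ⟨j, hj⟩ := hab
    · refine summable_of_ne_finset_zero (s := Finset.range (j + 1)) fun m hm => ?_
      have : j < m := by have h2 : ¬ (m < j + 1) := fun h => hm (Finset.mem_range.mpr h); omega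
      simp [T, poch_eq_zero hj this]
    · refine summable_of_ne_finset_zero (s := Finset.range (j + 1)) fun m hm => ?_
      have : j < m := by have h2 : ¬ (m < j + 1) := fun h => hm (Finset.mem_range.mpr h); omega
      simp [T, poch_eq_zero hj this]
  push_neg at hab
  obtain ⟨ha, hb⟩ := hab
  set δ := (c - a - b).re with hδ
  set L := ‖Complex.Gamma c / (Complex.Gamma a * Complex.Gamma b)‖ with hL
  have hΓa := Complex.Gamma_ne_zero ha
  have hΓb := Complex.Gamma_ne_zero hb
  have hr : Tendsto (fun n => ‖Complex.GammaSeq c n /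
      (Complex.GammaSeq a n * Complex.GammaSeq b n)‖) atTop (𝓝 L) := by
    exact ((Complex.GammaSeq_tendsto_Gamma c).div
      ((Complex.GammaSeq_tendsto_Gamma a).mul (Complex.GammaSeq_tendsto_Gamma b))
      (mul_ne_zero hΓa hΓb)).norm
  have hev : ∀ᶠ n : ℕ in atTop, ‖T a b c (n + 1)‖ ≤ (L + 1) * ((n : ℝ) ^ (1 + δ))⁻¹ := by
    filter_upwards [hr.eventually_le_const (by linarith : L < L + 1),
      eventually_ge_atTop 1] with n hrn hn1
    have hn : n ≠ 0 := by omega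
    have hnp : (0 : ℝ) < n := by exact_mod_cast Nat.pos_of_ne_zero hn
    have h1 := T_norm ha hb hc (n := n) hn
    have hre' : (a + b - c).re = -δ := by simp [hδ]; ring
    rw [hre'] at h1
    have hTn : ‖T a b c (n + 1)‖ = (n : ℝ) ^ (-δ) * ‖Complex.GammaSeq c n /
        (Complex.GammaSeq a n * Complex.GammaSeq b n)‖ / ((n : ℝ) + 1) := by
      rw [eq_div_iff (by positivity : ((n:ℝ) + 1) ≠ 0)]
      linarith [h1]
    rw [hTn]
    have e1 : ((n : ℝ) ^ (1 + δ))⁻¹ = (n : ℝ) ^ (-δ) / (n : ℝ) := by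
      rw [← Real.rpow_neg hnp.le, neg_add, Real.rpow_add hnp, Real.rpow_neg_one]
      ring
    rw [e1]
    have hpow : (0:ℝ) ≤ (n : ℝ) ^ (-δ) := Real.rpow_nonneg hnp.le _
    have hL0 : (0:ℝ) ≤ L := norm_nonneg _
    calc (n:ℝ) ^ (-δ) * ‖Complex.GammaSeq c n / (Complex.GammaSeq a n * Complex.GammaSeq b n)‖
          / ((n:ℝ) + 1)
        ≤ ((n:ℝ) ^ (-δ) * (L + 1)) / n := by
          exact div_le_div₀ (mul_nonneg hpow (by linarith)) (mul_le_mul_of_nonneg_left hrn hpow)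
            hnp (by linarith)
      _ = (L + 1) * ((n:ℝ) ^ (-δ) / n) := by ring
  have hg : Summable (fun n : ℕ => (L + 1) * ((n : ℝ) ^ (1 + δ))⁻¹) :=
    (Real.summable_nat_rpow_inv.mpr (by linarith)).mul_left _
  have : Summable (fun n : ℕ => ‖T a b c (n + 1)‖) := by
    refine Summable.of_norm_bounded_eventually_nat hg ?_
    simpa only [norm_norm] using hev
  exact (summable_nat_add_iff 1).mp this

lemma summable_T (a b c : ℂ) (hc : ∀ m : ℕ, c ≠ -(m : ℂ)) (hre : 0 < (c - a - b).re) :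
    Summable (T a b c) := (summable_norm_T a b c hc hre).of_norm

lemma tendsto_mul_T (a b c : ℂ) (hc : ∀ m : ℕ, c ≠ -(m : ℂ)) (hre : 0 < (c - a - b).re) :
    Tendsto (fun m : ℕ => (m : ℂ) * T a b c m) atTop (𝓝 0) := by
  by_cases hab : (∃ j : ℕ, a = -j) ∨ (∃ j : ℕ, b = -j)
  · have hz : ∀ᶠ m : ℕ in atTop, (m : ℂ) * T a b c m = 0 := by
      obtain ⟨j, hj⟩ | ⟨j, hj⟩ := hab <;>
      · filter_upwards [eventually_gt_atTop j] with m hm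
        simp [T, poch_eq_zero hj hm]
    exact Tendsto.congr' (hz.mono fun m h => h.symm) tendsto_const_nhds
  push_neg at hab
  obtain ⟨ha, hb⟩ := hab
  rw [← tendsto_add_atTop_iff_nat 1]
  rw [tendsto_zero_iff_norm_tendsto_zero]
  have hr : Tendsto (fun n => ‖Complex.GammaSeq c n /
      (Complex.GammaSeq a n * Complex.GammaSeq b n)‖) atTop
      (𝓝 ‖Complex.Gamma c / (Complex.Gamma a * Complex.Gamma b)‖) :=
    ((Complex.GammaSeq_tendsto_Gamma c).div
      ((Complex.GammaSeq_tendsto_Gamma a).mul (Complex.GammaSeq_tendsto_Gamma b))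
      (mul_ne_zero (Complex.Gamma_ne_zero ha) (Complex.Gamma_ne_zero hb))).norm
  have hpow : Tendsto (fun n : ℕ => (n : ℝ) ^ ((a + b - c).re)) atTop (𝓝 0) := by
    have h1 : (a + b - c).re = -((c - a - b).re) := by simp; ring
    rw [h1]
    exact (tendsto_rpow_neg_atTop hre).comp tendsto_natCast_atTop_atTop
  have key := hpow.mul hr
  rw [zero_mul] at key
  refine (tendsto_congr' ?_).mpr key
  filter_upwards [eventually_ge_atTop 1] with n hn1
  have hn : n ≠ 0 := by omega
  have h := T_norm ha hb hc (n := n) hn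
  push_cast
  rw [show ‖((n:ℂ) + 1) * T a b c (n + 1)‖ = ((n:ℝ) + 1) * ‖T a b c (n + 1)‖ by
    rw [norm_mul, show ((n : ℂ) + 1) = ((n + 1 : ℕ) : ℂ) by push_cast; ring,
      Complex.norm_natCast]; push_cast; ring]
  exact h

noncomputable def S (a b c : ℂ) : ℂ := ∑' m : ℕ, T a b c m

lemma hc_shift {c : ℂ} (hc : ∀ m : ℕ, c ≠ -(m : ℂ)) : ∀ m : ℕ, c + 1 ≠ -(m : ℂ) := by
  intro m h
  apply hc (m + 1)
  push_cast
  linear_combination h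

lemma hre_pos_ne {z : ℂ} (h : 0 < z.re) : ∀ m : ℕ, z ≠ -(m : ℂ) := by
  intro m hm
  rw [hm] at h
  simp at h
  have : (0:ℝ) ≤ (m:ℝ) := by positivity
  linarith

lemma T_rec {a b c : ℂ} (hc : ∀ m : ℕ, c ≠ -(m : ℂ)) (m : ℕ) :
    T a b c (m + 1) = T a b c m * ((a + m) * (b + m)) / ((c + m) * (m + 1)) := by
  have hpc := poch_ne_zero hc m
  have hcm : c + (m:ℂ) ≠ 0 := fun h => hc m (by linear_combination h)
  have hm1 : ((m:ℂ) + 1) ≠ 0 := by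
    intro h
    have := congrArg Complex.re h
    simp at this
    have : (0:ℝ) ≤ (m:ℝ) := by positivity
    linarith
  have hf : ((m)! : ℂ) ≠ 0 := by exact_mod_cast m.factorial_ne_zero
  have hfs : (((m+1))! : ℂ) = ((m : ℂ) + 1) * (m)! := by push_cast [Nat.factorial_succ]; ring
  rw [T, T, poch_succ, poch_succ, poch_succ, hfs]
  field_simp

lemma T_shift {a b c : ℂ} (hc : ∀ m : ℕ, c ≠ -(m : ℂ)) (m : ℕ) :
    T a b (c + 1) m = T a b c m * c / (c + m) := by
  have hpc := poch_ne_zero hc m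
  have hpc1 := poch_ne_zero (hc_shift hc) m
  have hc0 : c ≠ 0 := fun h => hc 0 (by simp [h])
  have hcm : c + (m:ℂ) ≠ 0 := fun h => hc m (by linear_combination h)
  have hkey : c * poch (c + 1) m = poch c m * (c + m) := by
    rw [← poch_succ_left, poch_succ]
  have hf : ((m)! : ℂ) ≠ 0 := by exact_mod_cast m.factorial_ne_zero
  rw [T, T]
  rw [div_mul_eq_mul_div, div_div]
  rw [div_eq_div_iff (mul_ne_zero hpc1 hf) (mul_ne_zero (mul_ne_zero hpc hf) hcm)]
  linear_combination (-(poch a m * poch b m * ((m)! : ℂ))) * hkey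

lemma termwise {a b c : ℂ} (hc : ∀ m : ℕ, c ≠ -(m : ℂ)) (m : ℕ) :
    c * (c - a - b) * T a b c m - (c - a) * (c - b) * T a b (c + 1) m
      = (-(c * (m + 1)) * T a b c (m + 1)) - (-(c * m) * T a b c m) := by
  have hcm : c + (m:ℂ) ≠ 0 := fun h => hc m (by linear_combination h)
  have hm1 : ((m:ℂ) + 1) ≠ 0 := by
    intro h
    have := congrArg Complex.re h
    simp at this
    have : (0:ℝ) ≤ (m:ℝ) := by positivity
    linarith
  rw [T_rec hc, T_shift hc]
  field_simp
  ring

lemma step (a b c : ℂ) (hc : ∀ m : ℕ, c ≠ -(m : ℂ)) (hre : 0 < (c - a - b).re) :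
    c * (c - a - b) * S a b c = (c - a) * (c - b) * S a b (c + 1) := by
  have hs1 := summable_T a b c hc hre
  have hre1 : 0 < (c + 1 - a - b).re := by
    simp only [Complex.sub_re, Complex.add_re, Complex.one_re] at *
    linarith
  have hs2 := summable_T a b (c + 1) (hc_shift hc) hre1
  have hdiff : Summable (fun m => c * (c - a - b) * T a b c m
      - (c - a) * (c - b) * T a b (c + 1) m) := (hs1.mul_left _).sub (hs2.mul_left _)
  have h1 : Tendsto (fun N => ∑ m ∈ range N, (c * (c - a - b) * T a b c m
      - (c - a) * (c - b) * T a b (c + 1) m)) atTop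
      (𝓝 (c * (c - a - b) * S a b c - (c - a) * (c - b) * S a b (c + 1))) := by
    have := hdiff.hasSum.tendsto_sum_nat
    rwa [Summable.tsum_sub (hs1.mul_left _) (hs2.mul_left _), tsum_mul_left, tsum_mul_left] at this
  have h2 : ∀ N : ℕ, ∑ m ∈ range N, (c * (c - a - b) * T a b c m
      - (c - a) * (c - b) * T a b (c + 1) m) = -(c * N) * T a b c N := by
    intro N
    have hts := Finset.sum_range_sub (fun m : ℕ => -(c * m) * T a b c m) N
    simp only [Nat.cast_zero, mul_zero, zero_mul, neg_zero, sub_zero] at hts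
    rw [← hts]
    refine Finset.sum_congr rfl fun m _ => ?_
    have h5 := termwise (a := a) (b := b) hc m
    push_cast at h5 ⊢
    linear_combination h5
  have h3 : Tendsto (fun N : ℕ => -(c * N) * T a b c N) atTop (𝓝 0) := by
    have := (tendsto_mul_T a b c hc hre).const_mul (-c)
    rw [mul_zero] at this
    refine (tendsto_congr fun N => ?_).mpr this
    ring
  have h4 : Tendsto (fun N => ∑ m ∈ range N, (c * (c - a - b) * T a b c m
      - (c - a) * (c - b) * T a b (c + 1) m)) atTop (𝓝 0) := by
    refine (tendsto_congr fun N => ?_).mpr h3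
    exact h2 N
  have := tendsto_nhds_unique h1 h4
  linear_combination this

lemma iterate (a b c : ℂ) (hc : ∀ m : ℕ, c ≠ -(m : ℂ)) (hre : 0 < (c - a - b).re) (n : ℕ) :
    poch c n * poch (c - a - b) n * S a b c
      = poch (c - a) n * poch (c - b) n * S a b (c + n) := by
  induction n with
  | zero => simp [poch_zero]
  | succ n ih =>
    have hcn : ∀ m : ℕ, c + n ≠ -(m : ℂ) := by
      intro m h
      apply hc (m + n)
      push_cast
      linear_combination h
    have hren : 0 < (c + n - a - b).re := by
      simp only [Complex.sub_re, Complex.add_re, Complex.natCast_re] at *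
      have : (0:ℝ) ≤ (n:ℝ) := by positivity
      linarith
    have hstep := step a b (c + n) hcn hren
    have hS1 : S a b (c + (n + 1 : ℕ)) = S a b (c + n + 1) := by
      norm_num [S]
      ring_nf
    rw [hS1, poch_succ, poch_succ, poch_succ, poch_succ]
    push_cast
    linear_combination ((c + n) * (c - a - b + n)) * ih
      + poch (c - a) n * poch (c - b) n * hstep

lemma tendsto_Q (a b c : ℂ) (hc : ∀ m : ℕ, c ≠ -(m : ℂ)) (hre : 0 < (c - a - b).re) :
    Tendsto (fun n : ℕ => poch (c - a) n * poch (c - b) n / (poch c n * poch (c - a - b) n))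
      atTop (𝓝 (Complex.Gamma c * Complex.Gamma (c - a - b)
        / (Complex.Gamma (c - a) * Complex.Gamma (c - b)))) := by
  by_cases hab : (∃ k : ℕ, c - a = -k) ∨ (∃ k : ℕ, c - b = -k)
  · have hG0 : Complex.Gamma (c - a) * Complex.Gamma (c - b) = 0 := by
      obtain ⟨k, hk⟩ | ⟨k, hk⟩ := hab <;> rw [hk, Complex.Gamma_neg_nat_eq_zero] <;> ring
    rw [hG0, div_zero]
    have hz : ∀ᶠ n : ℕ in atTop,
        poch (c - a) n * poch (c - b) n / (poch c n * poch (c - a - b) n) = 0 := by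
      obtain ⟨k, hk⟩ | ⟨k, hk⟩ := hab <;>
      · filter_upwards [eventually_gt_atTop k] with n hn
        simp [poch_eq_zero hk hn]
    exact Tendsto.congr' (hz.mono fun n h => h.symm) tendsto_const_nhds
  push_neg at hab
  obtain ⟨ha', hb'⟩ := hab
  have hcab := hre_pos_ne hre
  have hlim : Tendsto (fun m : ℕ => Complex.GammaSeq c m * Complex.GammaSeq (c - a - b) m
      / (Complex.GammaSeq (c - a) m * Complex.GammaSeq (c - b) m)) atTop
      (𝓝 (Complex.Gamma c * Complex.Gamma (c - a - b)
        / (Complex.Gamma (c - a) * Complex.Gamma (c - b)))) :=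
    ((Complex.GammaSeq_tendsto_Gamma c).mul (Complex.GammaSeq_tendsto_Gamma _)).div
      ((Complex.GammaSeq_tendsto_Gamma _).mul (Complex.GammaSeq_tendsto_Gamma _))
      (mul_ne_zero (Complex.Gamma_ne_zero ha') (Complex.Gamma_ne_zero hb'))
  rw [← tendsto_add_atTop_iff_nat 1]
  refine Tendsto.congr' ?_ hlim
  filter_upwards [eventually_ge_atTop 1] with m hm
  have hm0 : m ≠ 0 := by omega
  have hmc : (m : ℂ) ≠ 0 := by exact_mod_cast hm0
  have hpow : (m:ℂ) ^ (c - a) * (m:ℂ) ^ (c - b) = (m:ℂ) ^ c * (m:ℂ) ^ (c - a - b) := by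
    rw [← Complex.cpow_add _ _ hmc, ← Complex.cpow_add _ _ hmc]
    congr 1
    ring
  have hf : ((m)! : ℂ) ≠ 0 := by exact_mod_cast m.factorial_ne_zero
  have hnc : ∀ z : ℂ, (m : ℂ) ^ z ≠ 0 := fun z => by
    simp only [ne_eq, Complex.cpow_eq_zero_iff, not_and_or, not_not]; exact Or.inl hmc
  have hp1 := poch_ne_zero hc (m + 1)
  have hp2 := poch_ne_zero hcab (m + 1)
  have hp3 := poch_ne_zero ha' (m + 1)
  have hp4 := poch_ne_zero hb' (m + 1)
  rw [gammaSeq_eq, gammaSeq_eq, gammaSeq_eq, gammaSeq_eq, div_mul_div_comm, div_mul_div_comm,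
    div_div_div_eq, div_eq_div_iff (mul_ne_zero (mul_ne_zero hp1 hp2)
      (mul_ne_zero (mul_ne_zero (hnc (c-a)) hf) (mul_ne_zero (hnc (c-b)) hf)))
      (mul_ne_zero hp1 hp2)]
  linear_combination (-(poch c (m+1) * poch (c-a-b) (m+1) * poch (c-a) (m+1) * poch (c-b) (m+1)
    * ((m)! : ℂ) * ((m)! : ℂ))) * hpow

lemma norm_helper (c : ℂ) (n j : ℕ) : (n:ℝ) + j - ‖c‖ ≤ ‖c + n + j‖ := by
  have h1 : ‖((n:ℂ) + j)‖ ≤ ‖c + n + j‖ + ‖c‖ := by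
    calc ‖((n:ℂ) + j)‖ = ‖(c + n + j) - c‖ := by ring_nf
      _ ≤ ‖c + n + j‖ + ‖c‖ := norm_sub_le _ _
  have h2 : ‖((n:ℂ) + j)‖ = (n:ℝ) + j := by
    rw [show ((n:ℂ) + j) = (((n + j : ℕ) : ℂ)) by push_cast; ring, Complex.norm_natCast]
    push_cast; ring
  linarith

lemma tendsto_S_one (a b c : ℂ) :
    Tendsto (fun n : ℕ => S a b (c + n)) atTop (𝓝 1) := by
  set K : ℝ := max (max ‖a‖ ‖b‖) 1 with hK
  have hK1 : 1 ≤ K := le_max_right _ _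
  have hKa : ‖a‖ ≤ K := le_trans (le_max_left _ _) (le_max_left _ _)
  have hKb : ‖b‖ ≤ K := le_trans (le_max_right _ _) (le_max_left _ _)
  set M : ℝ := 2 * K + 2 with hM
  set g : ℕ → ℝ := fun m => ‖T (K : ℂ) (K : ℂ) (M : ℂ) m‖ with hg
  have hMc : ∀ m : ℕ, (M : ℂ) ≠ -(m : ℂ) := by
    intro m h
    have := congrArg Complex.re h
    simp [hM] at this
    have : (0:ℝ) ≤ (m:ℝ) := by positivity
    linarith
  have hMre : 0 < ((M : ℂ) - K - K).re := by
    simp [hM]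
    linarith
  have hgsum : Summable g := summable_norm_T _ _ _ hMc hMre
  -- pointwise limits
  have hlim : ∀ m : ℕ, Tendsto (fun n : ℕ => T a b (c + n) m) atTop
      (𝓝 (if m = 0 then 1 else 0)) := by
    intro m
    rcases Nat.eq_zero_or_pos m with rfl | hm
    · simp only [if_pos rfl]
      have : ∀ n : ℕ, T a b (c + n) 0 = 1 := fun n => T_zero a b _
      simpa [this] using tendsto_const_nhds
    · rw [if_neg hm.ne']
      rw [tendsto_zero_iff_norm_tendsto_zero]
      have hub : ∀ᶠ n : ℕ in atTop, ‖T a b (c + n) m‖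
          ≤ ‖poch a m‖ * ‖poch b m‖ / ((n : ℝ) - ‖c‖) := by
        filter_upwards [eventually_ge_atTop (⌈‖c‖⌉₊ + 1)] with n hn
        have hcn : ‖c‖ + 1 ≤ (n : ℝ) := by
          calc ‖c‖ + 1 ≤ (⌈‖c‖⌉₊ : ℝ) + 1 := by linarith [Nat.le_ceil ‖c‖]
            _ ≤ (n : ℝ) := by exact_mod_cast hn
        have hlow : ((n : ℝ) - ‖c‖) ≤ ‖poch (c + n) m‖ := by
          rw [poch_eq_prod, norm_prod]
          have h0m : 0 ∈ Finset.range m := Finset.mem_range.mpr hm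
          calc ((n:ℝ) - ‖c‖) ≤ ‖c + n + (0:ℕ)‖ := by
                have := norm_helper c n 0
                push_cast at this ⊢
                linarith
            _ = ∏ j ∈ Finset.range m, (if j = 0 then ‖c + (n:ℂ) + (0:ℕ)‖ else 1) := by
                rw [Finset.prod_eq_single 0 (fun j _ hj => if_neg hj) (fun h => absurd h0m h)]
                simp
            _ ≤ ∏ j ∈ Finset.range m, ‖c + n + j‖ := by
                refine Finset.prod_le_prod (fun j _ => by positivity) fun j _ => ?_
                by_cases hj : j = 0
                · subst hj; simp
                · rw [if_neg hj]
                  have := norm_helper c n j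
                  have hj0 : (0:ℝ) ≤ (j:ℝ) := by positivity
                  linarith
        rw [T, norm_div, norm_mul, norm_mul]
        apply div_le_div₀ (by positivity) le_rfl (by linarith) ?_
        calc ((n:ℝ) - ‖c‖) ≤ ‖poch (c + n) m‖ := hlow
          _ ≤ ‖poch (c + n) m‖ * ‖(m ! : ℂ)‖ := by
              have : (1:ℝ) ≤ ‖(m ! : ℂ)‖ := by
                rw [Complex.norm_natCast]
                exact_mod_cast Nat.one_le_iff_ne_zero.mpr m.factorial_ne_zero
              nlinarith [norm_nonneg (poch (c + n) m)]
      have h0 : Tendsto (fun n : ℕ => ‖poch a m‖ * ‖poch b m‖ / ((n : ℝ) - ‖c‖)) atTop (𝓝 0) := by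
        have hden : Tendsto (fun n : ℕ => (n:ℝ) - ‖c‖) atTop atTop := by
          simp only [sub_eq_add_neg]
          exact tendsto_atTop_add_const_right atTop (-‖c‖) tendsto_natCast_atTop_atTop
        exact Tendsto.div_atTop tendsto_const_nhds hden
      exact squeeze_zero' (by filter_upwards with n; positivity) hub h0
  -- domination
  have hbound : ∀ᶠ n : ℕ in atTop, ∀ m : ℕ, ‖T a b (c + n) m‖ ≤ g m := by
    filter_upwards [eventually_ge_atTop (⌈‖c‖ + M⌉₊)] with n hn m
    have hcn : ‖c‖ + M ≤ (n : ℝ) := le_trans (Nat.le_ceil _) (by exact_mod_cast hn)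
    have hnum : ∀ z : ℂ, ‖z‖ ≤ K → ‖poch z m‖ ≤ ∏ j ∈ Finset.range m, (K + j) := by
      intro z hz
      rw [poch_eq_prod]
      refine le_trans (norm_prod_le _ _) (Finset.prod_le_prod (fun j _ => norm_nonneg _)
        fun j _ => ?_)
      calc ‖z + j‖ ≤ ‖z‖ + ‖(j:ℂ)‖ := norm_add_le _ _
        _ ≤ K + j := by rw [Complex.norm_natCast]; linarith
    have hden : ∏ j ∈ Finset.range m, (M + j) ≤ ‖poch (c + n) m‖ := by
      rw [poch_eq_prod, norm_prod]
      refine Finset.prod_le_prod (fun j _ => by positivity) fun j _ => ?_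
      have := norm_helper c n j
      linarith
    have hgm : g m = (∏ j ∈ Finset.range m, (K + j)) * (∏ j ∈ Finset.range m, (K + j))
        / ((∏ j ∈ Finset.range m, (M + j)) * (m ! : ℝ)) := by
      simp only [hg, T]
      rw [norm_div, norm_mul, norm_mul, Complex.norm_natCast]
      congr 2
      · rw [poch_eq_prod, norm_prod]
        refine Finset.prod_congr rfl fun j _ => ?_
        rw [show (K:ℂ) + j = ((K + j : ℝ) : ℂ) by push_cast; ring, Complex.norm_real,
          Real.norm_of_nonneg (by positivity)]
      · rw [poch_eq_prod, norm_prod]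
        refine Finset.prod_congr rfl fun j _ => ?_
        rw [show (K:ℂ) + j = ((K + j : ℝ) : ℂ) by push_cast; ring, Complex.norm_real,
          Real.norm_of_nonneg (by positivity)]
      · rw [poch_eq_prod, norm_prod]
        refine Finset.prod_congr rfl fun j _ => ?_
        rw [show (M:ℂ) + j = ((M + j : ℝ) : ℂ) by push_cast; ring, Complex.norm_real,
          Real.norm_of_nonneg (by positivity)]
    rw [hgm]
    simp only [T]
    rw [norm_div, norm_mul, norm_mul, Complex.norm_natCast]
    have hPM : (0:ℝ) < ∏ j ∈ Finset.range m, (M + j) := by positivity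
    apply div_le_div₀ (by positivity)
      (mul_le_mul (hnum a hKa) (hnum b hKb) (norm_nonneg _) (by positivity))
      (by positivity)
    apply mul_le_mul hden le_rfl (by positivity) (norm_nonneg _)
  have := tendsto_tsum_of_dominated_convergence (f := fun (n : ℕ) (m : ℕ) => T a b (c + n) m)
    (g := fun m => if m = 0 then (1:ℂ) else 0) hgsum hlim hbound
  rw [tsum_ite_eq] at this
  exact this

/-- Gauss's summation theorem: if `Re(c - a - b) > 0` and `c` is not
a nonpositive integer, then the hypergeometric series `Σ (a)ₘ(b)ₘ/((c)ₘ m!)`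
converges and equals `Γ(c)Γ(c-a-b)/(Γ(c-a)Γ(c-b))`. -/
theorem statement9 (a b c : ℂ) (hc : ∀ m : ℕ, c ≠ -(m : ℂ))
    (hre : 0 < (c - a - b).re) :
    Summable (fun m : ℕ => poch a m * poch b m / (poch c m * (m ! : ℂ)))
      ∧ ∑' m : ℕ, poch a m * poch b m / (poch c m * (m ! : ℂ))
          = Complex.Gamma c * Complex.Gamma (c - a - b)
            / (Complex.Gamma (c - a) * Complex.Gamma (c - b)) := by
  refine ⟨summable_T a b c hc hre, ?_⟩
  show S a b c = _
  have hQ := tendsto_Q a b c hc hre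
  have hS := tendsto_S_one a b c
  have hmul := hQ.mul hS
  rw [mul_one] at hmul
  have hconst : ∀ n : ℕ, poch (c - a) n * poch (c - b) n / (poch c n * poch (c - a - b) n)
      * S a b (c + n) = S a b c := by
    intro n
    have hne : poch c n * poch (c - a - b) n ≠ 0 :=
      mul_ne_zero (poch_ne_zero hc n) (poch_ne_zero (hre_pos_ne hre) n)
    rw [div_mul_eq_mul_div, div_eq_iff hne]
    linear_combination (iterate a b c hc hre n).symm
  exact tendsto_nhds_unique ((tendsto_congr hconst).mpr tendsto_const_nhds) hmul
end

section
/- Dirichlet kernel limit: if h ∈ L¹(ℝ) and its classical Fourier transform ĥ also belongs to L¹(ℝ), then for every μ ∈ ℝ, lim_{t→∞} (1/π) ∫_{-∞}^{∞} h(λ) sin((λ-μ)t)/(λ-μ) dλ = h(μ), where h is identified with the continuous representative given by Fourier inversion. -/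
open MeasureTheory Filter Topology Complex

lemma aux_exp_integral (μ l t : ℝ) (hl : l ≠ μ) (hle : -t ≤ t) :
    (∫ x in (-t)..t, Complex.exp ((I * ((μ:ℂ) - (l:ℂ))) * x)) =
      2 * ((Real.sin ((l - μ) * t) / (l - μ) : ℝ) : ℂ) := by
  have hμl : (μ - l : ℝ) ≠ 0 := sub_ne_zero.mpr (Ne.symm hl)
  have hsub : ((μ:ℂ) - (l:ℂ)) ≠ 0 := by
    exact_mod_cast (Complex.ofReal_ne_zero.mpr hμl)
  have hc : (I * ((μ:ℂ) - (l:ℂ))) ≠ 0 := mul_ne_zero Complex.I_ne_zero hsub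
  rw [integral_exp_mul_complex hc]
  set a : ℝ := (μ - l) * t with ha
  have e1 : (I * ((μ:ℂ) - (l:ℂ))) * (t : ℝ) = (a : ℂ) * I := by
    rw [ha]; push_cast; ring
  have e2 : (I * ((μ:ℂ) - (l:ℂ))) * ((-t : ℝ) : ℂ) = ((-a : ℝ) : ℂ) * I := by
    rw [ha]; push_cast; ring
  rw [e1, e2, Complex.exp_mul_I, Complex.exp_mul_I]
  have hsin : Real.sin ((l - μ) * t) / (l - μ) = Real.sin a / (μ - l) := by
    rw [show (l - μ) * t = -a by rw [ha]; ring, Real.sin_neg,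
      show (l - μ : ℝ) = -(μ - l) by ring, neg_div_neg_eq]
  rw [hsin]
  push_cast
  field_simp
  rw [Complex.sin_neg, Complex.cos_neg]
  ring

/-- Dirichlet kernel limit: if `h ∈ L¹(ℝ)` and its classical Fourier
transform `ĥ(ξ) = ∫ h(λ)e^{-iξλ}dλ` is also in `L¹(ℝ)`, then for every `μ ∈ ℝ`,
`lim_{t→∞} (1/π) ∫ h(λ) sin((λ-μ)t)/(λ-μ) dλ` equals the value at `μ` of the
continuous representative of `h` given by Fourier inversion,
`(1/2π) ∫ ĥ(x) e^{iμx} dx`. -/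
theorem statement13 (h : ℝ → ℂ) (hh : Integrable h)
    (hhat : ℝ → ℂ)
    (hdef : ∀ ξ : ℝ, hhat ξ = ∫ lam : ℝ, h lam * Complex.exp (-I * (ξ:ℂ) * (lam:ℂ)))
    (hhat_int : Integrable hhat) :
    ∀ μ : ℝ,
      Tendsto (fun t : ℝ =>
          (1 / (Real.pi : ℂ)) * ∫ lam : ℝ, h lam * ((Real.sin ((lam - μ) * t) / (lam - μ) : ℝ) : ℂ))
        atTop
        (𝓝 ((1 / (2 * (Real.pi : ℂ))) * ∫ x : ℝ, hhat x * Complex.exp (I * (μ:ℂ) * (x:ℂ)))) := by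
  intro μ
  set g : ℝ → ℂ := fun x => hhat x * Complex.exp (I * (μ:ℂ) * (x:ℂ)) with hg
  have hg_int : Integrable g := by
    have h1 : Integrable (fun x : ℝ => Complex.exp (I * (μ:ℂ) * (x:ℂ)) * hhat x) :=
      hhat_int.bdd_mul
        (Complex.continuous_exp.comp (by fun_prop)).aestronglyMeasurable
        (c := 1) (Eventually.of_forall fun x => by
          rw [Complex.norm_exp]
          simp)
    exact h1.congr (by filter_upwards with x using mul_comm _ _)
  have key : ∀ t : ℝ, 0 ≤ t →
      (∫ x in (-t)..t, g x) =
        2 * ∫ lam : ℝ, h lam * ((Real.sin ((lam - μ) * t) / (lam - μ) : ℝ) : ℂ) := by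
    intro t ht
    have hle : -t ≤ t := by linarith
    set F : ℝ → ℝ → ℂ :=
      fun x l => h l * Complex.exp (-I * (x:ℂ) * (l:ℂ)) * Complex.exp (I * (μ:ℂ) * (x:ℂ)) with hF
    have hFmeas : AEStronglyMeasurable (Function.uncurry F)
        ((volume.restrict (Set.Ioc (-t) t)).prod volume) := by
      apply AEStronglyMeasurable.mul
      apply AEStronglyMeasurable.mul
      · exact hh.1.comp_snd
      · exact (Complex.continuous_exp.comp (by fun_prop)).aestronglyMeasurable
      · exact (Complex.continuous_exp.comp (by fun_prop)).aestronglyMeasurable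
    have hbound : Integrable (fun p : ℝ × ℝ => (1:ℝ) * ‖h p.2‖)
        ((volume.restrict (Set.Ioc (-t) t)).prod volume) :=
      (integrable_const (1:ℝ)).mul_prod hh.norm
    have hFint : Integrable (Function.uncurry F)
        ((volume.restrict (Set.Ioc (-t) t)).prod volume) := by
      refine hbound.mono' hFmeas ?_
      filter_upwards with p
      simp only [Function.uncurry, hF, norm_mul, Complex.norm_exp, one_mul]
      have e1 : (-I * (p.1:ℂ) * (p.2:ℂ)).re = 0 := by simp
      have e2 : (I * (μ:ℂ) * (p.1:ℂ)).re = 0 := by simp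
      rw [e1, e2]
      simp
    calc (∫ x in (-t)..t, g x)
        = ∫ x in Set.Ioc (-t) t, ∫ l : ℝ, F x l := by
          rw [intervalIntegral.integral_of_le hle]
          refine setIntegral_congr_fun measurableSet_Ioc fun x _ => ?_
          simp only [hg, hF, hdef x]
          rw [← integral_mul_const]
      _ = ∫ l : ℝ, ∫ x in Set.Ioc (-t) t, F x l := integral_integral_swap hFint
      _ = ∫ l : ℝ, 2 * (h l * ((Real.sin ((l - μ) * t) / (l - μ) : ℝ) : ℂ)) := by
          refine integral_congr_ae ?_
          have hne : ∀ᵐ l : ℝ, l ≠ μ := by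
            refine (ae_iff).mpr ?_
            simp
          filter_upwards [hne] with l hl
          have e1 : (∫ x in Set.Ioc (-t) t, F x l)
              = h l * ∫ x in (-t)..t, Complex.exp ((I * ((μ:ℂ) - (l:ℂ))) * x) := by
            rw [← intervalIntegral.integral_of_le hle, ← intervalIntegral.integral_const_mul]
            refine intervalIntegral.integral_congr fun x _ => ?_
            simp only [hF]
            rw [mul_assoc, ← Complex.exp_add]
            ring_nf
          rw [e1, aux_exp_integral μ l t hl hle]
          ring
      _ = 2 * ∫ lam : ℝ, h lam * ((Real.sin ((lam - μ) * t) / (lam - μ) : ℝ) : ℂ) :=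
          integral_const_mul _ _
  have tends : Tendsto (fun t : ℝ => (1 / (2 * (Real.pi:ℂ))) * ∫ x in (-t)..t, g x) atTop
      (𝓝 ((1 / (2 * (Real.pi:ℂ))) * ∫ x : ℝ, g x)) :=
    ((intervalIntegral_tendsto_integral hg_int tendsto_neg_atTop_atBot tendsto_id).const_mul _)
  refine tends.congr' ?_
  filter_upwards [eventually_ge_atTop (0:ℝ)] with t ht
  rw [key t ht]
  have hπ : (Real.pi : ℂ) ≠ 0 := by exact_mod_cast Real.pi_ne_zero
  rw [← mul_assoc]
  congr 1
  field_simp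
end
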